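/- Let E be a real inner product space, let ν ∈ E be a unit vector, let P : E → E be the orthogonal projection onto {x ∈ E : ⟪x, ν⟫ = 0}, let k ≥ 1, and let ω be an alternating k-linear form on E with values in ℝ. Then the normal part ω_⊥ = ω − ω ∘ P is the zero alternating form if and only if ω(ν, X₂,…,X_k) = 0 for all tangential vectors X₂,…,X_k ∈ E (i.e., if and only if the normal trace γ_ν ω vanishes). -/

import Mathlib

open scoped RealInnerProductSpace

/-- The normal part `ω − ω ∘ P` of an alternating `(k+1)`-form (a form of
degree `≥ 1`) vanishes iff the normal trace `γ_ν ω : (X₂,…,X_k) ↦ ω(ν, X₂,…,X_k)` vanishes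
on tangential vectors. -/
theorem normal_part_eq_zero_iff_normal_trace_eq_zero
    {E : Type*} [NormedAddCommGroup E] [InnerProductSpace ℝ E]
    (ν : E) (hν : ‖ν‖ = 1) (P : E → E)
    (hP : ∀ x, P x = x - ⟪x, ν⟫ • ν)
    (k : ℕ) (ω : AlternatingMap ℝ E ℝ (Fin (k + 1))) :
    (∀ Y : Fin (k + 1) → E, ω Y - ω (fun i => P (Y i)) = 0) ↔
      (∀ X : Fin k → E, (∀ i, ⟪X i, ν⟫ = 0) → ω (Fin.cons ν X) = 0) := by
  have hνν : ⟪ν, ν⟫ = 1 := by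
    rw [real_inner_self_eq_norm_mul_norm, hν]; ring
  have hPν : P ν = 0 := by rw [hP, hνν]; simp
  have hPtan : ∀ x, ⟪P x, ν⟫ = 0 := by
    intro x; rw [hP]; simp [inner_sub_left, real_inner_smul_left, hνν, hν]
  have hdecomp : ∀ x, x = P x + ⟪x, ν⟫ • ν := by
    intro x; rw [hP]; abel
  constructor
  · intro hnormal X hX
    have h2 := hnormal (Fin.cons ν X)
    have h0 : ω (fun i => P ((Fin.cons ν X : Fin (k + 1) → E) i)) = 0 :=
      ω.map_coord_zero 0 (by simp [hPν])
    rw [h0, sub_zero] at h2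
    exact h2
  · intro h
    -- keyA : ω vanishes with ν in the first slot, arbitrary other slots
    have keyA : ∀ X : Fin k → E, ω (Fin.cons ν X) = 0 := by
      suffices H : ∀ n (X : Fin k → E),
          (∀ i : Fin k, n ≤ (i : ℕ) → ⟪X i, ν⟫ = 0) → ω (Fin.cons ν X) = 0 by
        intro X
        exact H k X (fun i hi => absurd i.isLt (not_lt.2 hi))
      intro n
      induction n with
      | zero => intro X hX; exact h X (fun i => hX i (Nat.zero_le _))
      | succ n ih =>
        intro X hX
        by_cases hnk : n < k
        · set j : Fin k := ⟨n, hnk⟩ with hj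
          have hXj : X = Function.update X j (P (X j) + ⟪X j, ν⟫ • ν) := by
            rw [← hdecomp, Function.update_eq_self]
          rw [hXj, Fin.cons_update, ω.map_update_add, ω.map_update_smul]
          have hz : ω (Function.update (Fin.cons ν X) j.succ ν) = 0 := by
            apply ω.map_eq_zero_of_eq _ (i := 0) (j := j.succ)
            · rw [Function.update_of_ne (Fin.succ_ne_zero j).symm, Fin.cons_zero,
                Function.update_self]
            · exact (Fin.succ_ne_zero j).symm
          rw [hz, smul_zero, add_zero, ← Fin.cons_update]
          apply ih
          intro i hi
          rcases eq_or_ne i j with rfl | hij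
          · rw [Function.update_self]; exact hPtan _
          · rw [Function.update_of_ne hij]
            apply hX
            have : (i : ℕ) ≠ n := fun hc => hij (Fin.ext hc)
            omega
        · apply ih
          intro i hi
          exact absurd i.isLt (by omega)
    -- keyB : ω vanishes with ν in any slot
    have keyB : ∀ (Y : Fin (k + 1) → E) (j : Fin (k + 1)), Y j = ν → ω Y = 0 := by
      intro Y j hYj
      by_cases hj : j = 0
      · subst hj
        have hY : Y = Fin.cons ν (Fin.tail Y) := by
          rw [← hYj]; exact (Fin.cons_self_tail Y).symm
        rw [hY]; exact keyA _
      · have hs := ω.map_swap Y (Ne.symm hj : (0 : Fin (k + 1)) ≠ j)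
        have hg : ω (Y ∘ Equiv.swap 0 j) = 0 := by
          have hY : Y ∘ Equiv.swap 0 j
              = Fin.cons ν (Fin.tail (Y ∘ Equiv.swap 0 j)) := by
            have h0 : (Y ∘ Equiv.swap 0 j) 0 = ν := by
              simp [Function.comp, Equiv.swap_apply_left, hYj]
            rw [← h0]; exact (Fin.cons_self_tail _).symm
          rw [hY]; exact keyA _
        rw [hg] at hs
        linarith
    -- main induction: projecting the first n coordinates does not change ω
    have R : ∀ n (Y : Fin (k + 1) → E),
        ω (fun i => if (i : ℕ) < n then P (Y i) else Y i) = ω Y := by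
      intro n
      induction n with
      | zero => intro Y; congr 1
      | succ n ih =>
        intro Y
        by_cases hnk : n < k + 1
        · set j : Fin (k + 1) := ⟨n, hnk⟩ with hj
          have hjn : (j : ℕ) = n := rfl
          set Z : Fin (k + 1) → E := fun i => if (i : ℕ) < n then P (Y i) else Y i with hZ
          have hZj : Z j = Y j := by simp [hZ, hj]
          have e1 : (fun i : Fin (k + 1) => if (i : ℕ) < n + 1 then P (Y i) else Y i)
              = Function.update Z j (P (Y j)) := by
            funext i
            rcases eq_or_ne i j with rfl | hij
            · rw [Function.update_self, if_pos (by rw [hjn]; omega)]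
            · rw [Function.update_of_ne hij]
              simp only [hZ]
              have : (i : ℕ) ≠ n := fun hc => hij (Fin.ext (hc.trans hjn.symm))
              by_cases hi : (i : ℕ) < n
              · rw [if_pos (by omega), if_pos hi]
              · rw [if_neg (by omega), if_neg hi]
          rw [e1]
          have e2 : ω Z = ω (Function.update Z j (P (Y j)))
              + ⟪Y j, ν⟫ • ω (Function.update Z j ν) := by
            conv_lhs => rw [← Function.update_eq_self j Z, hZj, hdecomp (Y j)]
            rw [ω.map_update_add, ω.map_update_smul]
          have hz : ω (Function.update Z j ν) = 0 :=
            keyB _ j (Function.update_self j ν Z)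
          rw [hz, smul_zero, add_zero] at e2
          rw [← e2, ih]
        · have e : (fun i : Fin (k + 1) => if (i : ℕ) < n + 1 then P (Y i) else Y i)
              = fun i : Fin (k + 1) => if (i : ℕ) < n then P (Y i) else Y i := by
            funext i
            have := i.isLt
            rw [if_pos (by omega), if_pos (by omega)]
          rw [e, ih]
    intro Y
    have := R (k + 1) Y
    have e : (fun i : Fin (k + 1) => if (i : ℕ) < k + 1 then P (Y i) else Y i)
        = fun i : Fin (k + 1) => P (Y i) := by
      funext i; rw [if_pos i.isLt]
    rw [e] at this
    rw [this, sub_self]
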